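/- arXiv:2411.04726 — 2 statements merged into one kernel-verified Lean document; each statement's English description precedes it below -/
import Mathlib

section
/- The infinite product ∏_{k≥1}(1−q^k) equals the sum ∑_{j=−∞}^{∞}(−1)^j q^{j(3j+1)/2} as formal power series (Euler's pentagonal number theorem). -/
open Finset PowerSeries

namespace PNT

noncomputable section

/-- Triangular numbers: `T j = j (j+1) / 2`. -/
def T : ℕ → ℕ
  | 0 => 0
  | (j+1) => T j + (j+1)

lemma twoT (j : ℕ) : 2 * T j = j * (j + 1) := by
  induction j with
  | zero => rfl
  | succ j ih => simp only [T]; rw [Nat.mul_add, ih]; ring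

lemma le_T (j : ℕ) : j ≤ T j := by
  induction j with
  | zero => exact Nat.le_refl 0
  | succ j ih => simp only [T]; omega

/-- exponent in Shanks' identity -/
def e (n j : ℕ) : ℕ := n * j + T j

/-- `R a b = ∏_{k=a+1}^{b} (1 - X^k)`, i.e. `P_b / P_a`. -/
def R (a b : ℕ) : PowerSeries ℤ :=
  ∏ k ∈ Finset.Icc (a+1) b, (1 - (PowerSeries.X : PowerSeries ℤ) ^ k)

/-- term of Shanks' sum -/
def t (n j : ℕ) : PowerSeries ℤ :=
  PowerSeries.C ((-1:ℤ)^j) * (R j n * (PowerSeries.X : PowerSeries ℤ) ^ (e n j))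

/-- Shanks' sum -/
def G (n : ℕ) : PowerSeries ℤ := ∑ j ∈ range (n+1), t n j

lemma R_self (a : ℕ) : R a a = 1 := by simp [R]

lemma Rsplit_top (j n : ℕ) (h : j ≤ n) :
    R j (n+1) = R j n * (1 - (PowerSeries.X : PowerSeries ℤ) ^ (n+1)) := by
  rw [R, R, Finset.prod_Icc_succ_top (by omega)]

lemma Rsplit_bot (j n : ℕ) (h : j < n) :
    R j n = (1 - (PowerSeries.X : PowerSeries ℤ) ^ (j+1)) * R (j+1) n := by
  rw [R, R, ← Finset.Ico_add_one_right_eq_Icc, ← Finset.Ico_add_one_right_eq_Icc,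
    Finset.prod_eq_prod_Ico_succ_bot (by omega)]

/-- the auxiliary term `F` in the telescoping -/
def F (n j : ℕ) : PowerSeries ℤ :=
  PowerSeries.C ((-1:ℤ)^j) * (R j n * (PowerSeries.X : PowerSeries ℤ) ^ (e (n+1) j))

lemma term_step (n j : ℕ) (h : j < n) :
    t (n+1) j = F n j - F n (j+1) + t n (j+1) := by
  have he1 : e (n+1) j + (n+1) = e n (j+1) := by simp only [e, T]; ring
  have he2 : e n (j+1) + (j+1) = e (n+1) (j+1) := by simp only [e, T]; ring
  have hsign : ((-1:ℤ)^j) = -((-1:ℤ)^(j+1)) := by ring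
  rw [t, Rsplit_top j n (le_of_lt h), t, F, F,
    Rsplit_bot j n h, ← he2, ← he1, hsign]
  push_cast [map_neg]
  ring

lemma term_top (n : ℕ) :
    t (n+1) n = F n n + PowerSeries.C ((-1:ℤ)^(n+1)) *
      (PowerSeries.X : PowerSeries ℤ) ^ ((n+1)*(n+1) + T n) := by
  have he : e (n+1) n + (n+1) = (n+1)*(n+1) + T n := by simp only [e]; ring
  have hsign : ((-1:ℤ)^n) = -((-1:ℤ)^(n+1)) := by ring
  rw [t, Rsplit_top n n (le_refl n), R_self, F, R_self, ← he, hsign]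
  push_cast [map_neg]
  ring

lemma term_last (n : ℕ) :
    t (n+1) (n+1) = PowerSeries.C ((-1:ℤ)^(n+1)) *
      (PowerSeries.X : PowerSeries ℤ) ^ ((n+1)*(n+1) + T (n+1)) := by
  have he : e (n+1) (n+1) = (n+1)*(n+1) + T (n+1) := by simp only [e]
  rw [t, R_self, he, one_mul]

lemma F_zero (n : ℕ) : F n 0 = t n 0 := by
  simp [F, t, e, T]

lemma G_step (n : ℕ) :
    G (n+1) = G n + PowerSeries.C ((-1:ℤ)^(n+1)) *
      ((PowerSeries.X : PowerSeries ℤ) ^ ((n+1)*(n+1) + T (n+1)) +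
       (PowerSeries.X : PowerSeries ℤ) ^ ((n+1)*(n+1) + T n)) := by
  have h1 : G (n+1) = (∑ j ∈ range n, t (n+1) j) + t (n+1) n + t (n+1) (n+1) := by
    rw [G, Finset.sum_range_succ, Finset.sum_range_succ]
  have h2 : ∑ j ∈ range n, t (n+1) j
      = (∑ j ∈ range n, (F n j - F n (j+1))) + ∑ j ∈ range n, t n (j+1) := by
    rw [← Finset.sum_add_distrib]
    exact Finset.sum_congr rfl fun j hj => term_step n j (Finset.mem_range.mp hj)
  have h3 : ∑ j ∈ range n, (F n j - F n (j+1)) = F n 0 - F n n :=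
    Finset.sum_range_sub' (fun j => F n j) n
  have h4 : ∑ j ∈ range n, t n (j+1) = G n - t n 0 := by
    rw [G, Finset.sum_range_succ']; ring
  rw [h1, h2, h3, h4, term_top, term_last, F_zero]
  ring

lemma t_zero (n : ℕ) :
    t n 0 = ∏ k ∈ Finset.Icc 1 n, (1 - (PowerSeries.X : PowerSeries ℤ) ^ k) := by
  simp [t, R, e, T]

lemma t_coeff_vanish (n j : ℕ) (h : 1 ≤ j) :
    (PowerSeries.coeff (R := ℤ) n) (t n j) = 0 := by
  have hle : ¬ (e n j ≤ n) := by
    have h1 : j ≤ T j := le_T j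
    have h2 : n * 1 ≤ n * j := Nat.mul_le_mul_left n h
    simp only [e]; omega
  rw [t, coeff_C_mul, PowerSeries.coeff_mul_X_pow', if_neg hle, mul_zero]

lemma G_closed (n : ℕ) : G n = 1 + ∑ m ∈ range n,
    PowerSeries.C ((-1:ℤ)^(m+1)) *
      ((PowerSeries.X : PowerSeries ℤ) ^ ((m+1)*(m+1) + T (m+1)) +
       (PowerSeries.X : PowerSeries ℤ) ^ ((m+1)*(m+1) + T m)) := by
  induction n with
  | zero => simp [G, t_zero]
  | succ n ih => rw [G_step, ih, Finset.sum_range_succ]; ring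

lemma coeff_G (n : ℕ) : (PowerSeries.coeff (R := ℤ) n) (G n) =
    (if n = 0 then 1 else 0) + ∑ m ∈ range n, (-1:ℤ)^(m+1) *
      ((if (m+1)*(m+1) + T (m+1) = n then 1 else 0) +
       (if (m+1)*(m+1) + T m = n then 1 else 0)) := by
  rw [G_closed]
  simp only [map_add, map_sum, PowerSeries.coeff_one, coeff_C_mul, PowerSeries.coeff_X_pow]
  simp [eq_comm]

lemma coeff_P (n : ℕ) :
    (PowerSeries.coeff (R := ℤ) n) (∏ k ∈ Finset.Icc 1 n, (1 - (PowerSeries.X : PowerSeries ℤ) ^ k))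
      = (PowerSeries.coeff (R := ℤ) n) (G n) := by
  rw [G, Finset.sum_range_succ', map_add, t_zero, map_sum]
  rw [Finset.sum_eq_zero fun j _ => t_coeff_vanish n (j+1) (by omega)]
  ring

lemma reflect (f : ℤ → ℤ) (n : ℕ) :
    ∑ j ∈ Finset.Icc (-(n:ℤ)) n, f j
      = f 0 + ∑ m ∈ range n, (f ((m:ℤ)+1) + f (-((m:ℤ)+1))) := by
  induction n with
  | zero => simp
  | succ n ih =>
    have hins : Finset.Icc (-(n+1:ℤ)) (n+1) =
        insert (-(n+1:ℤ)) (insert ((n+1:ℤ)) (Finset.Icc (-(n:ℤ)) n)) := by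
      ext j; simp only [Finset.mem_Icc, Finset.mem_insert]; push_cast; omega
    push_cast
    rw [hins, Finset.sum_insert (by simp only [Finset.mem_insert, Finset.mem_Icc]; push_cast; omega),
      Finset.sum_insert (by simp only [Finset.mem_Icc]; push_cast; omega), ih,
      Finset.sum_range_succ]
    push_cast
    ring

lemma even_j (j : ℤ) : (2:ℤ) ∣ j * (3*j+1) := by
  rcases Int.even_or_odd j with ⟨k, hk⟩ | ⟨k, hk⟩
  · exact ⟨k*(3*j+1), by rw [hk]; ring⟩
  · exact ⟨j*(3*k+2), by rw [hk]; ring⟩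

lemma div_eq_iff (j : ℤ) (n : ℕ) : (j * (3*j+1) / 2 = (n:ℤ)) ↔ j * (3*j+1) = 2*n := by
  constructor
  · intro h
    obtain ⟨c, hc⟩ := even_j j
    rw [hc] at h ⊢
    rw [Int.mul_ediv_cancel_left _ two_ne_zero] at h
    rw [h]
  · intro h; rw [h, Int.mul_ediv_cancel_left _ two_ne_zero]

lemma vanish (n : ℕ) (j : ℤ) (hj : j ∉ Finset.Icc (-(n:ℤ)) n) :
    (if j * (3 * j + 1) / 2 = (n : ℤ) then (-1 : ℤ) ^ j.natAbs else 0) = 0 := by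
  rw [if_neg]
  intro h
  rw [div_eq_iff] at h
  simp only [Finset.mem_Icc, not_and_or, not_le] at hj
  rcases hj with hj | hj
  · nlinarith
  · nlinarith

lemma f_pos (n m : ℕ) :
    (if ((m:ℤ)+1) * (3*((m:ℤ)+1)+1) / 2 = (n:ℤ) then (-1:ℤ)^(((m:ℤ)+1)).natAbs else 0)
      = (if (m+1)*(m+1) + T (m+1) = n then (-1:ℤ)^(m+1) else 0) := by
  have h2 : ((m:ℤ)+1) * (3*((m:ℤ)+1)+1) = 2 * ((m+1)*(m+1) + T (m+1) : ℕ) := by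
    have := twoT (m+1)
    push_cast
    push_cast at this
    nlinarith [this]
  have hna : (((m:ℤ)+1)).natAbs = m+1 := by omega
  simp only [div_eq_iff, hna, h2, Int.mul_ediv_cancel_left _ (by norm_num : (2:ℤ) ≠ 0),
    Nat.cast_inj]

lemma f_neg (n m : ℕ) :
    (if (-((m:ℤ)+1)) * (3*(-((m:ℤ)+1))+1) / 2 = (n:ℤ) then (-1:ℤ)^((-((m:ℤ)+1))).natAbs else 0)
      = (if (m+1)*(m+1) + T m = n then (-1:ℤ)^(m+1) else 0) := by
  have h2 : (-((m:ℤ)+1)) * (3*(-((m:ℤ)+1))+1) = 2 * ((m+1)*(m+1) + T m : ℕ) := by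
    have := twoT m
    push_cast
    push_cast at this
    nlinarith [this]
  have hna : ((-((m:ℤ)+1))).natAbs = m+1 := by omega
  simp only [hna, h2, Int.mul_ediv_cancel_left _ (by norm_num : (2:ℤ) ≠ 0), Nat.cast_inj]

lemma tsum_side (n : ℕ) :
    (∑' j : ℤ, if j * (3 * j + 1) / 2 = (n : ℤ) then (-1 : ℤ) ^ j.natAbs else 0)
      = (if n = 0 then 1 else 0) + ∑ m ∈ range n, (-1:ℤ)^(m+1) *
          ((if (m+1)*(m+1) + T (m+1) = n then 1 else 0) +
           (if (m+1)*(m+1) + T m = n then 1 else 0)) := by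
  rw [tsum_eq_sum (s := Finset.Icc (-(n:ℤ)) n) (fun j hj => vanish n j hj)]
  rw [reflect]
  congr 1
  · simp only [zero_mul, Int.zero_ediv]
    by_cases h : n = 0 <;> simp [h, eq_comm]
  · refine Finset.sum_congr rfl fun m _ => ?_
    rw [f_pos, f_neg]
    split_ifs <;> ring

end

end PNT

/-- Euler's pentagonal number theorem, stated coefficientwise: the `n`-th coefficient of
the infinite product `∏_{k≥1}(1-q^k)` (which equals that of the partial product up to `n`)
is `∑_{j∈ℤ, j(3j+1)/2 = n} (-1)^j`. -/
theorem euler_pentagonal_number_theorem (n : ℕ) :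
    (PowerSeries.coeff (R := ℤ) n)
        (∏ k ∈ Finset.Icc 1 n, (1 - (PowerSeries.X : PowerSeries ℤ) ^ k)) =
      ∑' j : ℤ, if j * (3 * j + 1) / 2 = (n : ℤ) then (-1 : ℤ) ^ j.natAbs else 0 := by
  rw [PNT.coeff_P, PNT.coeff_G, PNT.tsum_side]
end

section
/- For every integer k ≥ 1, the formal power series (1/(q;q)_∞) · ∑_{j ∉ [−k,k−1]} (−1)^{j+k} q^{j(3j+1)/2} has all coefficients nonnegative, where the sum is over integers j < −k or j > k−1. -/
open Multiset Finset

namespace AMProof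

lemma sup_mem {s : Multiset ℕ} (h : s ≠ 0) : s.sup ∈ s := by
  induction s using Multiset.induction_on with
  | empty => simp at h
  | cons a t ih =>
    rw [Multiset.sup_cons]
    rcases eq_or_ne t 0 with rfl | ht
    · simp
    · rcases max_choice a t.sup with h1 | h1 <;> rw [h1]
      · exact Multiset.mem_cons_self _ _
      · exact Multiset.mem_cons_of_mem (ih ht)

lemma sum_map_succ (s : Multiset ℕ) : (s.map (· + 1)).sum = s.sum + s.card := by
  rw [Multiset.sum_map_add]; simp [Multiset.map_id']

lemma sum_map_pred (s : Multiset ℕ) (h : ∀ x ∈ s, 1 ≤ x) :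
    (s.map (· - 1)).sum + s.card = s.sum := by
  induction s using Multiset.induction_on with
  | empty => simp
  | cons a t ih =>
    simp only [Multiset.map_cons, Multiset.sum_cons, Multiset.card_cons]
    have h1 := h a (Multiset.mem_cons_self _ _)
    have := ih (fun x hx => h x (Multiset.mem_cons_of_mem hx))
    omega

lemma sup_cons_of_le {a : ℕ} {s : Multiset ℕ} (h : ∀ x ∈ s, x ≤ a) :
    (a ::ₘ s).sup = a := by
  rw [Multiset.sup_cons]
  exact sup_eq_left.2 (Multiset.sup_le.2 h)

def prank {n : ℕ} (l : n.Partition) : ℤ := (l.parts.sup : ℤ) - l.parts.card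

lemma parts_ne_zero {n : ℕ} {l : n.Partition} {m : ℕ} (hm : 1 ≤ m)
    (h : (m : ℤ) ≤ prank l) : l.parts ≠ 0 := by
  intro h0
  rw [prank, h0] at h
  simp at h; omega

def Qge (a : ℤ) (N : ℕ) : ℕ := (univ.filter fun l : N.Partition => a ≤ prank l).card
def Qle (a : ℤ) (N : ℕ) : ℕ := (univ.filter fun l : N.Partition => prank l ≤ a).card

section Dyson

variable {m N : ℕ}

/-- facts about a partition of rank ≥ m ≥ 1 -/
lemma fact_l (hm : 1 ≤ m) (l : (N + m + 1).Partition) (hl : (m : ℤ) ≤ prank l) :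
    l.parts.sup ::ₘ l.parts.erase l.parts.sup = l.parts ∧
    m + 1 + (l.parts.erase l.parts.sup).card ≤ l.parts.sup ∧
    l.parts.sup + (l.parts.erase l.parts.sup).sum = N + m + 1 := by
  have hne : l.parts ≠ 0 := parts_ne_zero hm hl
  have hcons : l.parts.sup ::ₘ l.parts.erase l.parts.sup = l.parts :=
    Multiset.cons_erase (sup_mem hne)
  have hcard : l.parts.card = (l.parts.erase l.parts.sup).card + 1 := by
    have h' := congrArg Multiset.card hcons
    rw [Multiset.card_cons] at h'
    omega
  have hsum : l.parts.sup + (l.parts.erase l.parts.sup).sum = N + m + 1 := by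
    have h' := l.parts_sum
    rw [← hcons, Multiset.sum_cons] at h'
    exact h'
  refine ⟨hcons, ?_, hsum⟩
  rw [prank, hcard] at hl
  push_cast at hl
  omega

/-- facts about a partition of rank ≤ m+2 -/
lemma fact_w (w : N.Partition) (hw : prank w ≤ (m : ℤ) + 2) :
    (w.parts.filter (2 ≤ ·)) + (w.parts.filter (fun x => ¬ 2 ≤ x)) = w.parts ∧
    (w.parts.filter (fun x => ¬ 2 ≤ x)) =
      Multiset.replicate (w.parts.card - (w.parts.filter (2 ≤ ·)).card) 1 ∧
    (w.parts.filter (2 ≤ ·)).card ≤ w.parts.card ∧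
    w.parts.sup ≤ m + 2 + w.parts.card ∧
    (w.parts.filter (2 ≤ ·)).sum + (w.parts.card - (w.parts.filter (2 ≤ ·)).card) = N := by
  have hsplit : w.parts.filter (2 ≤ ·) + w.parts.filter (fun x => ¬ 2 ≤ x) = w.parts :=
    Multiset.filter_add_not _ _
  have hcards : (w.parts.filter (2 ≤ ·)).card +
      (w.parts.filter (fun x => ¬ 2 ≤ x)).card = w.parts.card := by
    rw [← Multiset.card_add, hsplit]
  have hones : (w.parts.filter (fun x => ¬ 2 ≤ x)) =
      Multiset.replicate (w.parts.filter (fun x => ¬ 2 ≤ x)).card 1 := by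
    rw [Multiset.eq_replicate]
    refine ⟨rfl, fun b hb => ?_⟩
    have h1 := (Multiset.mem_filter.1 hb).2
    have h2 := w.parts_pos (Multiset.mem_filter.1 hb).1
    omega
  have hsum : (w.parts.filter (2 ≤ ·)).sum +
      (w.parts.filter (fun x => ¬ 2 ≤ x)).sum = N := by
    rw [← Multiset.sum_add, hsplit, w.parts_sum]
  have honesum : (w.parts.filter (fun x => ¬ 2 ≤ x)).sum =
      (w.parts.filter (fun x => ¬ 2 ≤ x)).card := by
    conv_lhs => rw [hones]
    rw [Multiset.sum_replicate, smul_eq_mul, mul_one]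
  have hsup : w.parts.sup ≤ m + 2 + w.parts.card := by
    rw [prank] at hw
    omega
  refine ⟨hsplit, ?_, by omega, hsup, by omega⟩
  rw [hones]
  congr 1
  omega

lemma dyson (hm : 1 ≤ m) : Qge (m : ℤ) (N + m + 1) = Qle ((m : ℤ) + 2) N := by
  rw [Qge, Qle]
  refine Finset.card_bij'
    (fun l hl =>
      ⟨((l.parts.erase l.parts.sup).map (· + 1)) +
        Multiset.replicate (l.parts.sup - (m + 1 + (l.parts.erase l.parts.sup).card)) 1,
        by
          intro i hi
          rcases Multiset.mem_add.1 hi with hi | hi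
          · obtain ⟨y, _, rfl⟩ := Multiset.mem_map.1 hi; omega
          · rw [Multiset.eq_of_mem_replicate hi]; omega,
        by
          simp only [Finset.mem_filter] at hl
          obtain ⟨hcons, hineq, hsum⟩ := fact_l hm l hl.2
          rw [Multiset.sum_add, sum_map_succ, Multiset.sum_replicate, smul_eq_mul, mul_one]
          omega⟩)
    (fun w hw =>
      ⟨(w.parts.card + m + 1) ::ₘ ((w.parts.filter (2 ≤ ·)).map (· - 1)), by
          intro i hi
          rcases Multiset.mem_cons.1 hi with rfl | hi
          · omega
          · obtain ⟨y, hy, rfl⟩ := Multiset.mem_map.1 hi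
            have := (Multiset.mem_filter.1 hy).2
            omega,
        by
          simp only [Finset.mem_filter] at hw
          obtain ⟨hsplit, hones, hcls, hsup, hsum⟩ := fact_w w hw.2
          have hmapsum : ((w.parts.filter (2 ≤ ·)).map (· - 1)).sum +
              (w.parts.filter (2 ≤ ·)).card = (w.parts.filter (2 ≤ ·)).sum :=
            sum_map_pred _ (fun x hx => by have := (Multiset.mem_filter.1 hx).2; omega)
          rw [Multiset.sum_cons]
          omega⟩)
    (fun l hl => by
      simp only [Finset.mem_filter] at hl ⊢
      refine ⟨Finset.mem_univ _, ?_⟩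
      obtain ⟨hcons, hineq, hsum⟩ := fact_l hm l hl.2
      rw [prank]
      dsimp only
      have hsup : (((l.parts.erase l.parts.sup).map (· + 1)) +
          Multiset.replicate (l.parts.sup - (m + 1 + (l.parts.erase l.parts.sup).card)) 1).sup
          ≤ l.parts.sup + 1 := by
        apply Multiset.sup_le.2
        intro b hb
        rcases Multiset.mem_add.1 hb with hb | hb
        · obtain ⟨y, hy, rfl⟩ := Multiset.mem_map.1 hb
          have : y ≤ l.parts.sup := Multiset.le_sup (Multiset.mem_of_mem_erase hy)
          omega
        · rw [Multiset.eq_of_mem_replicate hb]; omega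
      rw [Multiset.card_add, Multiset.card_map, Multiset.card_replicate]
      push_cast
      omega)
    (fun w hw => by
      simp only [Finset.mem_filter] at hw ⊢
      refine ⟨Finset.mem_univ _, ?_⟩
      obtain ⟨hsplit, hones, hcls, hsup, hsum⟩ := fact_w w hw.2
      rw [prank]
      dsimp only
      have hsups : ((w.parts.filter (2 ≤ ·)).map (· - 1)).sup ≤ w.parts.card + m + 1 := by
        apply Multiset.sup_le.2
        intro b hb
        obtain ⟨y, hy, rfl⟩ := Multiset.mem_map.1 hb
        have : y ≤ w.parts.sup := Multiset.le_sup (Multiset.mem_filter.1 hy).1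
        omega
      rw [sup_cons_of_le (fun x hx => by
        obtain ⟨y, hy, rfl⟩ := Multiset.mem_map.1 hx
        have : y ≤ w.parts.sup := Multiset.le_sup (Multiset.mem_filter.1 hy).1
        omega)]
      rw [Multiset.card_cons, Multiset.card_map]
      push_cast
      omega)
    (fun l hl => by
      simp only [Finset.mem_filter] at hl
      obtain ⟨hcons, hineq, hsum⟩ := fact_l hm l hl.2
      apply Nat.Partition.ext
      dsimp only
      have hfiltmap : ((l.parts.erase l.parts.sup).map (· + 1)).filter (2 ≤ ·) =
          (l.parts.erase l.parts.sup).map (· + 1) := by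
        apply Multiset.filter_eq_self.2
        intro b hb
        obtain ⟨y, hy, rfl⟩ := Multiset.mem_map.1 hb
        have := l.parts_pos (Multiset.mem_of_mem_erase hy)
        omega
      have hfiltrep : (Multiset.replicate
          (l.parts.sup - (m + 1 + (l.parts.erase l.parts.sup).card)) 1).filter (2 ≤ ·) = 0 := by
        apply Multiset.filter_eq_nil.2
        intro b hb
        rw [Multiset.eq_of_mem_replicate hb]
        omega
      rw [Multiset.filter_add, hfiltmap, hfiltrep, add_zero, Multiset.map_map]
      have hmapid : ((l.parts.erase l.parts.sup).map ((· - 1) ∘ (· + 1))) =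
          l.parts.erase l.parts.sup := by
        have : ((· - 1) ∘ (· + 1) : ℕ → ℕ) = id := by funext x; simp
        rw [this, Multiset.map_id]
      rw [hmapid, Multiset.card_add, Multiset.card_map, Multiset.card_replicate]
      have : Multiset.card (l.parts.erase l.parts.sup) +
          (l.parts.sup - (m + 1 + Multiset.card (l.parts.erase l.parts.sup))) + m + 1
          = l.parts.sup := by omega
      rw [this, hcons])
    (fun w hw => by
      simp only [Finset.mem_filter] at hw
      obtain ⟨hsplit, hones, hcls, hsup, hsum⟩ := fact_w w hw.2
      apply Nat.Partition.ext
      dsimp only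
      have hsupc : ((w.parts.card + m + 1) ::ₘ
          ((w.parts.filter (2 ≤ ·)).map (· - 1))).sup = w.parts.card + m + 1 := by
        apply sup_cons_of_le
        intro x hx
        obtain ⟨y, hy, rfl⟩ := Multiset.mem_map.1 hx
        have : y ≤ w.parts.sup := Multiset.le_sup (Multiset.mem_filter.1 hy).1
        omega
      rw [hsupc, Multiset.erase_cons_head, Multiset.map_map, Multiset.card_map]
      have hmapF : ((w.parts.filter (2 ≤ ·)).map ((· + 1) ∘ (· - 1))) =
          w.parts.filter (2 ≤ ·) := by
        rw [show ((· + 1) ∘ (· - 1) : ℕ → ℕ) = fun x => x - 1 + 1 from rfl]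
        rw [Multiset.map_congr rfl (fun x hx => by
          have := (Multiset.mem_filter.1 hx).2
          simp only [id_eq]
          omega : ∀ x ∈ w.parts.filter (2 ≤ ·), x - 1 + 1 = (id x : ℕ))]
        rw [Multiset.map_id]
      rw [hmapF]
      have hrep : w.parts.card + m + 1 - (m + 1 + Multiset.card (w.parts.filter (2 ≤ ·)))
          = w.parts.card - (w.parts.filter (2 ≤ ·)).card := by omega
      rw [hrep, ← hones, hsplit])


end Dyson

lemma sup_le_sum (s : Multiset ℕ) : s.sup ≤ s.sum := by
  apply Multiset.sup_le.2
  intro b hb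
  exact Multiset.single_le_sum (fun x _ => Nat.zero_le x) b hb

lemma Qle_add_Qge (a : ℤ) (N : ℕ) :
    Qle a N + Qge (a + 1) N = Fintype.card N.Partition := by
  rw [Qle, Qge]
  have : (univ.filter fun l : N.Partition => a + 1 ≤ prank l)
      = (univ.filter fun l : N.Partition => ¬ prank l ≤ a) := by
    apply Finset.filter_congr
    intro l _
    simp only [not_le, eq_iff_iff]
    omega
  rw [this, Finset.card_filter_add_card_filter_not, Fintype.card]

lemma Qge_eq_zero {m : ℕ} (hm : 1 ≤ m) {N : ℕ} (h : N ≤ m) : Qge (m : ℤ) N = 0 := by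
  rw [Qge, Finset.card_eq_zero, Finset.filter_eq_empty_iff]
  intro l _
  simp only [not_le]
  rcases eq_or_ne l.parts 0 with h0 | h0
  · rw [prank, h0]; simp; omega
  · have h1 : l.parts.sup ∈ l.parts := sup_mem h0
    have h2 : l.parts.sup ≤ N := le_trans (sup_le_sum _) (le_of_eq l.parts_sum)
    have h3 : 1 ≤ l.parts.card := by rwa [Nat.one_le_iff_ne_zero, ne_eq, Multiset.card_eq_zero]
    rw [prank]
    have : (l.parts.sup : ℤ) ≤ N := by exact_mod_cast h2
    have : (1 : ℤ) ≤ l.parts.card := by exact_mod_cast h3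
    omega


lemma parts_decomp {N : ℕ} (l : N.Partition) :
    l.parts.sup + (l.parts.erase l.parts.sup).sum = N := by
  rcases eq_or_ne l.parts 0 with h0 | h0
  · have := l.parts_sum
    rw [h0] at this
    simp only [Multiset.sum_zero] at this
    rw [h0]
    simp [← this]
  · have hcons := Multiset.cons_erase (sup_mem h0)
    have h' := l.parts_sum
    rw [← hcons, Multiset.sum_cons] at h'
    exact h'

lemma Qge_mono (d : ℕ) (hd : 1 ≤ d) {m : ℕ} (hm : 1 ≤ m) (m' : ℤ) (h : m' ≤ m + d) (N : ℕ) :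
    Qge (m : ℤ) N ≤ Qge m' (N + d) := by
  rw [Qge, Qge]
  have hpos : ∀ (l : N.Partition) (i : ℕ),
      i ∈ (l.parts.sup + d) ::ₘ l.parts.erase l.parts.sup → 0 < i := by
    intro l i hi
    rcases Multiset.mem_cons.1 hi with rfl | hi
    · omega
    · exact l.parts_pos (Multiset.mem_of_mem_erase hi)
  have hsum : ∀ l : N.Partition,
      ((l.parts.sup + d) ::ₘ l.parts.erase l.parts.sup).sum = N + d := by
    intro l
    rw [Multiset.sum_cons]
    have := parts_decomp l
    omega
  have hsupim : ∀ l : N.Partition,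
      ((l.parts.sup + d) ::ₘ l.parts.erase l.parts.sup).sup = l.parts.sup + d := by
    intro l
    apply sup_cons_of_le
    intro x hx
    have : x ≤ l.parts.sup := Multiset.le_sup (Multiset.mem_of_mem_erase hx)
    omega
  apply Finset.card_le_card_of_injOn
    (fun l => ⟨(l.parts.sup + d) ::ₘ l.parts.erase l.parts.sup, fun hi => hpos _ _ hi, hsum l⟩)
  · intro l hl
    simp only [Finset.mem_coe, Finset.mem_filter] at hl ⊢
    refine ⟨Finset.mem_univ _, ?_⟩
    have hne : l.parts ≠ 0 := parts_ne_zero hm hl.2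
    have hcons := Multiset.cons_erase (sup_mem hne)
    have hcard : l.parts.card = (l.parts.erase l.parts.sup).card + 1 := by
      have h' := congrArg Multiset.card hcons
      rw [Multiset.card_cons] at h'
      omega
    rw [prank] at hl ⊢
    dsimp only
    rw [hsupim l, Multiset.card_cons]
    push_cast
    push_cast [hcard] at hl
    omega
  · intro l₁ hl₁ l₂ hl₂ heq
    simp only [Finset.coe_filter, Set.mem_setOf_eq] at hl₁ hl₂
    have hparts := congrArg Nat.Partition.parts heq
    dsimp only at hparts
    have hsups := congrArg Multiset.sup hparts
    rw [hsupim l₁, hsupim l₂] at hsups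
    have hsupeq : l₁.parts.sup = l₂.parts.sup := by omega
    rw [hsupeq] at hparts
    have herase : l₁.parts.erase l₂.parts.sup = l₂.parts.erase l₂.parts.sup := by
      have hh := hparts
      rwa [Multiset.cons_eq_cons, or_iff_left (by simp), and_iff_right rfl] at hh
    apply Nat.Partition.ext
    have hne₁ : l₁.parts ≠ 0 := parts_ne_zero hm hl₁.2
    have hne₂ : l₂.parts ≠ 0 := parts_ne_zero hm hl₂.2
    have c₁ := Multiset.cons_erase (sup_mem hne₁)
    rw [hsupeq] at c₁
    have c₂ := Multiset.cons_erase (sup_mem hne₂)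
    calc l₁.parts = l₂.parts.sup ::ₘ l₁.parts.erase l₂.parts.sup := c₁.symm
      _ = l₂.parts.sup ::ₘ l₂.parts.erase l₂.parts.sup := by rw [herase]
      _ = l₂.parts := c₂

def pp (x : ℤ) : ℤ := if 0 ≤ x then (Fintype.card (Nat.Partition x.toNat) : ℤ) else 0
def QQ (m : ℕ) (x : ℤ) : ℤ := if 0 ≤ x then (Qge (m : ℤ) x.toNat : ℤ) else 0

lemma QQ_nonneg (m : ℕ) (x : ℤ) : 0 ≤ QQ m x := by
  rw [QQ]; split
  · positivity
  · exact le_refl 0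
  
lemma QQ_rec (m : ℕ) (hm : 1 ≤ m) (x : ℤ) :
    QQ m x = pp (x - m - 1) - QQ (m + 3) (x - m - 1) := by
  rcases le_or_gt 0 (x - m - 1) with hx | hx
  · have hx0 : 0 ≤ x := by omega
    rw [QQ, QQ, pp, if_pos hx0, if_pos hx, if_pos hx]
    have hN : x.toNat = (x - m - 1).toNat + m + 1 := by omega
    rw [hN, dyson hm]
    have hsplit := Qle_add_Qge ((m : ℤ) + 2) (x - m - 1).toNat
    have hcast : (m : ℤ) + 2 + 1 = ((m + 3 : ℕ) : ℤ) := by push_cast; ring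
    rw [hcast] at hsplit
    have hfc : Fintype.card ((x - m - 1).toNat.Partition) =
        Qle ((m:ℤ)+2) (x - m - 1).toNat + Qge ((m+3 : ℕ) : ℤ) (x - m - 1).toNat := hsplit.symm
    omega
  · have h1 : ¬ (0 ≤ x - (m : ℤ) - 1) := by omega
    rw [QQ, QQ, pp, if_neg h1, if_neg h1]
    rcases le_or_gt 0 x with h0 | h0
    · rw [if_pos h0, Qge_eq_zero hm (show x.toNat ≤ m by omega)]
      simp
    · rw [if_neg (by omega)]
      simp

def ee (m j : ℕ) : ℕ := j * (3 * j - 1) / 2 + m * j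

lemma two_dvd_pent (j : ℕ) : 2 ∣ j * (3 * j - 1) := by
  rcases Nat.even_or_odd j with ⟨c, hc⟩ | ⟨c, hc⟩
  · subst hc
    refine ⟨c * (3 * (c + c) - 1), ?_⟩
    generalize (3 * (c + c) - 1) = X
    ring
  · subst hc
    refine ⟨(2 * c + 1) * (3 * c + 1), ?_⟩
    have h1 : 3 * (2 * c + 1) - 1 = 2 * (3 * c + 1) := by omega
    rw [h1]; ring

lemma two_ee (m j : ℕ) : 2 * ee m j = j * (3 * j - 1) + 2 * (m * j) := by
  have h2 := two_dvd_pent j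
  rw [ee]
  omega

lemma ee_rec (m j : ℕ) : ee m (j + 1) = (m + 1) + ee (m + 3) j := by
  have h1 := two_ee m (j + 1)
  have h2 := two_ee (m + 3) j
  have e1 : (j + 1) * (3 * (j + 1) - 1) = j * (3 * j - 1) + 6 * j + 2 := by
    rcases j with _ | i
    · simp
    · have a : 3 * (i + 1) - 1 = 3 * i + 2 := by omega
      have b : 3 * (i + 1 + 1) - 1 = 3 * i + 5 := by omega
      rw [a, b]; ring
  have e2 : m * (j + 1) = m * j + m := by ring
  have e3 : (m + 3) * j = m * j + 3 * j := by ring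
  omega

lemma ee_one (m : ℕ) : ee m 1 = m + 1 := by
  rw [ee]; norm_num; omega

lemma main_id (B : ℕ) : ∀ (m : ℕ), 1 ≤ m → ∀ x : ℤ, x < B + 1 →
    ∑ i ∈ Finset.range B, (-1 : ℤ) ^ i * pp (x - ee m (i + 1)) = QQ m x := by
  induction B with
  | zero =>
    intro m hm x hx
    rw [Finset.range_zero, Finset.sum_empty, QQ]
    split
    case isTrue h0 =>
      have hle : x.toNat ≤ m := by omega
      rw [Qge_eq_zero hm hle]
      simp
    case isFalse h0 => rfl
  | succ B ih =>
    intro m hm x hx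
    rw [Finset.sum_range_succ']
    have hf0 : (-1 : ℤ) ^ 0 * pp (x - ee m (0 + 1)) = pp (x - m - 1) := by
      rw [pow_zero, one_mul, zero_add, ee_one]
      congr 1
      push_cast
      ring
    have hstep : ∀ i, (-1 : ℤ) ^ (i + 1) * pp (x - ee m (i + 1 + 1))
        = -((-1 : ℤ) ^ i * pp ((x - m - 1) - ee (m + 3) (i + 1))) := by
      intro i
      rw [ee_rec m (i + 1), pow_succ]
      have harg : x - ((m + 1 + ee (m + 3) (i + 1) : ℕ) : ℤ)
          = (x - m - 1) - ee (m + 3) (i + 1) := by push_cast; ring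
      rw [harg]
      ring
    rw [Finset.sum_congr rfl (fun i _ => hstep i), Finset.sum_neg_distrib,
      ih (m + 3) (by omega) (x - m - 1) (by omega), hf0, QQ_rec m hm x]
    ring


lemma G2 (j : ℤ) : 2 * (j * (3 * j + 1) / 2) = j * (3 * j + 1) := by
  apply Int.mul_ediv_cancel'
  have h1 : Even (j * (j + 1)) := Int.even_mul_succ_self j
  have h2 : j * (3 * j + 1) = j * (j + 1) + 2 * (j * j) := by ring
  have h3 : Even (j * (3 * j + 1)) := by
    rw [h2]
    exact h1.add (even_two_mul _)
  exact h3.two_dvd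

lemma jbound {k n : ℕ} (hk : 1 ≤ k) {j : ℤ}
    (hc : j < -(k : ℤ) ∨ (k : ℤ) ≤ j) (hG : j * (3 * j + 1) / 2 ≤ (n : ℤ)) :
    -(n : ℤ) - 1 ≤ j ∧ j ≤ (n : ℤ) + 1 := by
  have h2 := G2 j
  have hGn : j * (3 * j + 1) ≤ 2 * n := by omega
  have hkz : (1 : ℤ) ≤ (k : ℤ) := by exact_mod_cast hk
  rcases hc with hc | hc
  · have hj : j ≤ -1 := by omega
    constructor
    · nlinarith
    · omega
  · have hj : 1 ≤ j := by omega
    constructor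
    · omega
    · nlinarith

lemma Gpos {k : ℕ} (hk : 1 ≤ k) {j : ℤ}
    (hc : j < -(k : ℤ) ∨ (k : ℤ) ≤ j) : 0 < j * (3 * j + 1) / 2 := by
  have h2 := G2 j
  have hkz : (1 : ℤ) ≤ (k : ℤ) := by exact_mod_cast hk
  have : 0 < j * (3 * j + 1) := by
    rcases hc with hc | hc
    · have hj : j ≤ -1 := by omega
      nlinarith
    · have hj : 1 ≤ j := by omega
      nlinarith
  omega


lemma two_c1' (k : ℕ) : 2 * ((k - 1) * (3 * k - 2) / 2) = (k - 1) * (3 * k - 2) := by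
  apply Nat.mul_div_cancel'
  rcases Nat.even_or_odd k with ⟨c, hc⟩ | ⟨c, hc⟩
  · subst hc
    refine ⟨(c + c - 1) * (3 * c - 1), ?_⟩
    rw [show 3 * (c + c) - 2 = 2 * (3 * c - 1) by omega]
    ring
  · subst hc
    refine ⟨c * (3 * (2 * c + 1) - 2), ?_⟩
    rw [show 2 * c + 1 - 1 = 2 * c by omega]
    ring

lemma two_c2' (k : ℕ) : 2 * (k * (3 * k - 1) / 2) = k * (3 * k - 1) := by
  apply Nat.mul_div_cancel'
  rcases Nat.even_or_odd k with ⟨c, hc⟩ | ⟨c, hc⟩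
  · subst hc
    refine ⟨c * (3 * (c + c) - 1), ?_⟩
    rw [show c + c = 2 * c by omega]
    ring
  · subst hc
    refine ⟨(2 * c + 1) * (3 * c + 1), ?_⟩
    rw [show 3 * (2 * c + 1) - 1 = 2 * (3 * c + 1) by omega]
    ring


section Assembly2

variable {k n : ℕ}

lemma cast_ee1 (hk : 1 ≤ k) (i : ℕ) :
    2 * ((ee (3 * k - 2) (i + 1) : ℤ))
      = ((i : ℤ) + 1) * (3 * ((i : ℤ) + 1) - 1) + 2 * ((3 * (k : ℤ) - 2) * ((i : ℤ) + 1)) := by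
  have h := two_ee (3 * k - 2) (i + 1)
  zify [show 1 ≤ 3 * (i + 1) by omega, show 2 ≤ 3 * k by omega] at h
  linear_combination h

lemma cast_ee2 (i : ℕ) :
    2 * ((ee (3 * k) (i + 1) : ℤ))
      = ((i : ℤ) + 1) * (3 * ((i : ℤ) + 1) - 1) + 2 * ((3 * (k : ℤ)) * ((i : ℤ) + 1)) := by
  have h := two_ee (3 * k) (i + 1)
  zify [show 1 ≤ 3 * (i + 1) by omega] at h
  linear_combination h

lemma cast_c1 (hk : 1 ≤ k) :
    2 * (((k - 1) * (3 * k - 2) / 2 : ℕ) : ℤ) = ((k : ℤ) - 1) * (3 * (k : ℤ) - 2) := by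
  have h := two_c1' k
  have h1 : (2 : ℤ) * (((k - 1) * (3 * k - 2) / 2 : ℕ) : ℤ)
      = ((2 * ((k - 1) * (3 * k - 2) / 2) : ℕ) : ℤ) := by
    rw [Nat.cast_mul, Nat.cast_ofNat]
  rw [h1, h, Nat.cast_mul, show ((k - 1 : ℕ) : ℤ) = (k : ℤ) - 1 by omega,
    show ((3 * k - 2 : ℕ) : ℤ) = 3 * (k : ℤ) - 2 by omega]

lemma cast_c2 (hk : 1 ≤ k) :
    2 * ((k * (3 * k - 1) / 2 : ℕ) : ℤ) = (k : ℤ) * (3 * (k : ℤ) - 1) := by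
  have h := two_c2' k
  have h1 : (2 : ℤ) * ((k * (3 * k - 1) / 2 : ℕ) : ℤ)
      = ((2 * (k * (3 * k - 1) / 2) : ℕ) : ℤ) := by
    rw [Nat.cast_mul, Nat.cast_ofNat]
  rw [h1, h, Nat.cast_mul, show ((3 * k - 1 : ℕ) : ℤ) = 3 * (k : ℤ) - 1 by omega]

lemma stepE1 (hk : 1 ≤ k) (i : ℕ) :
    (n : ℤ) - ((k : ℤ) + i) * (3 * ((k : ℤ) + i) + 1) / 2
      = ((n : ℤ) - ((k - 1) * (3 * k - 2) / 2 : ℕ)) - (ee (3 * k - 2) (i + 1) : ℤ) := by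
  have hG := G2 ((k : ℤ) + i)
  have hee := cast_ee1 hk i
  have hc1 := cast_c1 hk
  have key : ((k : ℤ) + i) * (3 * ((k : ℤ) + i) + 1)
      = ((k : ℤ) - 1) * (3 * (k : ℤ) - 2)
        + (((i : ℤ) + 1) * (3 * ((i : ℤ) + 1) - 1) + 2 * ((3 * (k : ℤ) - 2) * ((i : ℤ) + 1))) := by
    ring
  linarith

lemma stepE2 (hk : 1 ≤ k) (i : ℕ) :
    (n : ℤ) - (-(k : ℤ) - 1 - i) * (3 * (-(k : ℤ) - 1 - i) + 1) / 2
      = ((n : ℤ) - (k * (3 * k - 1) / 2 : ℕ)) - (ee (3 * k) (i + 1) : ℤ) := by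
  have hG := G2 (-(k : ℤ) - 1 - i)
  have hee := cast_ee2 (k := k) i
  have hc2 := cast_c2 hk
  have key : (-(k : ℤ) - 1 - i) * (3 * (-(k : ℤ) - 1 - i) + 1)
      = (k : ℤ) * (3 * (k : ℤ) - 1)
        + (((i : ℤ) + 1) * (3 * ((i : ℤ) + 1) - 1) + 2 * ((3 * (k : ℤ)) * ((i : ℤ) + 1))) := by
    ring
  linarith

/-- vanishing of the summand outside the interval -/
lemma hvanF (hk : 1 ≤ k) (j : ℤ)
    (hj : (if (j < -(k : ℤ) ∨ (k : ℤ) ≤ j) then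
      (-1 : ℤ) ^ (j + k).natAbs * pp ((n : ℤ) - j * (3 * j + 1) / 2) else 0) ≠ 0) :
    j ∈ Finset.Icc (-(n : ℤ) - 1) ((n : ℤ) + 1) := by
  rw [Finset.mem_Icc]
  by_cases hc : j < -(k : ℤ) ∨ (k : ℤ) ≤ j
  · rw [if_pos hc] at hj
    have hpp : pp ((n : ℤ) - j * (3 * j + 1) / 2) ≠ 0 := by
      intro h0; rw [h0, mul_zero] at hj; exact hj rfl
    have hle : j * (3 * j + 1) / 2 ≤ (n : ℤ) := by
      by_contra hgt
      exact hpp (by rw [pp, if_neg (by omega)])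
    exact jbound hk hc hle
  · rw [if_neg hc] at hj; exact absurd rfl hj

lemma stepD (hk : 1 ≤ k) :
    (∑ j ∈ Finset.Icc (-(n : ℤ) - 1) ((n : ℤ) + 1),
      if (j < -(k : ℤ) ∨ (k : ℤ) ≤ j) then
        (-1 : ℤ) ^ (j + k).natAbs * pp ((n : ℤ) - j * (3 * j + 1) / 2) else 0)
    = (∑ i ∈ Finset.range (n + 2),
        (-1 : ℤ) ^ i * pp ((n : ℤ) - ((k : ℤ) + i) * (3 * ((k : ℤ) + i) + 1) / 2))
      - (∑ i ∈ Finset.range (n + 2),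
        (-1 : ℤ) ^ i * pp ((n : ℤ) - (-(k : ℤ) - 1 - i) * (3 * (-(k : ℤ) - 1 - i) + 1) / 2)) := by
  classical
  set F : ℤ → ℤ := fun j => if (j < -(k : ℤ) ∨ (k : ℤ) ≤ j) then
      (-1 : ℤ) ^ (j + k).natAbs * pp ((n : ℤ) - j * (3 * j + 1) / 2) else 0 with hFdef
  set U₁ : Finset ℤ := (Finset.range (n + 2)).image (fun i : ℕ => (k : ℤ) + i) with hU₁
  set U₂ : Finset ℤ := (Finset.range (n + 2)).image (fun i : ℕ => -(k : ℤ) - 1 - i) with hU₂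
  have hsub1 : ∑ j ∈ Finset.Icc (-(n : ℤ) - 1) ((n : ℤ) + 1), F j
      = ∑ j ∈ Finset.Icc (-(n : ℤ) - 1) ((n : ℤ) + 1) ∪ (U₁ ∪ U₂), F j := by
    apply Finset.sum_subset Finset.subset_union_left
    intro j _ hjnot
    by_contra hne
    exact hjnot (hvanF hk j hne)
  have hsub2 : ∑ j ∈ U₁ ∪ U₂, F j
      = ∑ j ∈ Finset.Icc (-(n : ℤ) - 1) ((n : ℤ) + 1) ∪ (U₁ ∪ U₂), F j := by
    apply Finset.sum_subset Finset.subset_union_right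
    intro j hj hjnot
    by_contra hne
    have hIcc := hvanF hk j hne
    rw [Finset.mem_Icc] at hIcc
    have hc : j < -(k : ℤ) ∨ (k : ℤ) ≤ j := by
      by_contra hc
      apply hne
      rw [hFdef]
      simp only [if_neg hc]
    apply hjnot
    rcases hc with hc | hc
    · apply Finset.mem_union_right
      rw [hU₂, Finset.mem_image]
      exact ⟨(-(k : ℤ) - 1 - j).toNat, Finset.mem_range.2 (by omega), by omega⟩
    · apply Finset.mem_union_left
      rw [hU₁, Finset.mem_image]
      exact ⟨(j - (k : ℤ)).toNat, Finset.mem_range.2 (by omega), by omega⟩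
  have hdisj : Disjoint U₁ U₂ := by
    rw [Finset.disjoint_left]
    intro j hj1 hj2
    rw [hU₁, Finset.mem_image] at hj1
    rw [hU₂, Finset.mem_image] at hj2
    obtain ⟨i1, _, hi1⟩ := hj1
    obtain ⟨i2, _, hi2⟩ := hj2
    omega
  rw [hsub1, ← hsub2, Finset.sum_union hdisj]
  have hs1 : ∑ j ∈ U₁, F j = ∑ i ∈ Finset.range (n + 2),
      (-1 : ℤ) ^ i * pp ((n : ℤ) - ((k : ℤ) + i) * (3 * ((k : ℤ) + i) + 1) / 2) := by
    rw [hU₁, Finset.sum_image (by intro a _ b _ h; simp only at h; omega)]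
    apply Finset.sum_congr rfl
    intro i _
    rw [hFdef]
    dsimp only
    rw [if_pos (Or.inr (by omega))]
    congr 1
    have habs : ((k : ℤ) + i + k).natAbs = 2 * k + i := by omega
    rw [habs, pow_add, pow_mul, neg_one_sq, one_pow, one_mul]
  have hs2 : ∑ j ∈ U₂, F j = - ∑ i ∈ Finset.range (n + 2),
      (-1 : ℤ) ^ i * pp ((n : ℤ) - (-(k : ℤ) - 1 - i) * (3 * (-(k : ℤ) - 1 - i) + 1) / 2) := by
    rw [hU₂, Finset.sum_image (by intro a _ b _ h; simp only at h; omega), ← Finset.sum_neg_distrib]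
    apply Finset.sum_congr rfl
    intro i _
    rw [hFdef]
    dsimp only
    rw [if_pos (Or.inl (by omega))]
    have habs : (-(k : ℤ) - 1 - i + k).natAbs = i + 1 := by omega
    rw [habs, pow_succ]
    ring
  rw [hs1, hs2]
  ring


end Assembly2

section Assembly

variable {k n : ℕ}

lemma stepC (hk : 1 ≤ k) (j : ℤ) :
    ∑ m ∈ Finset.range (n + 1), (Fintype.card (Nat.Partition m) : ℤ) *
      (if (j < -(k : ℤ) ∨ (k : ℤ) ≤ j) ∧ j * (3 * j + 1) / 2 = ((n - m : ℕ) : ℤ)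
        then (-1 : ℤ) ^ (j + k).natAbs else 0)
    = if (j < -(k : ℤ) ∨ (k : ℤ) ≤ j) then
        (-1 : ℤ) ^ (j + k).natAbs * pp ((n : ℤ) - j * (3 * j + 1) / 2) else 0 := by
  by_cases hc : j < -(k : ℤ) ∨ (k : ℤ) ≤ j
  · rw [if_pos hc]
    have hGpos := Gpos hk hc
    by_cases hGn : j * (3 * j + 1) / 2 ≤ (n : ℤ)
    · -- unique m₀
      set g : ℕ := (j * (3 * j + 1) / 2).toNat with hg
      have hgle : g ≤ n := by omega
      have hgcast : ((g : ℤ)) = j * (3 * j + 1) / 2 := by omega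
      rw [Finset.sum_eq_single (n - g)]
      · have hcond : (j < -(k : ℤ) ∨ (k : ℤ) ≤ j) ∧
            j * (3 * j + 1) / 2 = ((n - (n - g) : ℕ) : ℤ) := by
          refine ⟨hc, ?_⟩
          have : (n - (n - g) : ℕ) = g := by omega
          rw [this]
          omega
        rw [if_pos hcond, pp, if_pos (by omega)]
        have : ((n : ℤ) - j * (3 * j + 1) / 2).toNat = n - g := by omega
        rw [this]
        ring
      · intro m hm hne
        rw [Finset.mem_range] at hm
        rw [if_neg, mul_zero]
        rintro ⟨-, habs⟩
        have : (n - m : ℕ) = g := by omega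
        omega
      · intro habs
        exact absurd (Finset.mem_range.2 (by omega)) habs
    · -- G j > n : everything vanishes
      rw [pp, if_neg (by omega), mul_zero]
      apply Finset.sum_eq_zero
      intro m hm
      rw [Finset.mem_range] at hm
      rw [if_neg, mul_zero]
      rintro ⟨-, habs⟩
      have h1 : ((n - m : ℕ) : ℤ) ≤ (n : ℤ) := by
        have : (n - m : ℕ) ≤ n := by omega
        exact_mod_cast this
      omega
  · rw [if_neg hc]
    apply Finset.sum_eq_zero
    intro m hm
    rw [if_neg, mul_zero]
    rintro ⟨habs, -⟩
    exact hc habs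


end Assembly

lemma stepAB {k n : ℕ} (hk : 1 ≤ k) :
    (∑ m ∈ Finset.range (n + 1), (Fintype.card (Nat.Partition m) : ℤ) *
      ∑' j : ℤ, if (j < -(k : ℤ) ∨ (k : ℤ) ≤ j) ∧ j * (3 * j + 1) / 2 = ((n - m : ℕ) : ℤ)
        then (-1 : ℤ) ^ (j + k).natAbs else 0)
    = ∑ j ∈ Finset.Icc (-(n : ℤ) - 1) ((n : ℤ) + 1),
        if (j < -(k : ℤ) ∨ (k : ℤ) ≤ j) then
          (-1 : ℤ) ^ (j + k).natAbs * pp ((n : ℤ) - j * (3 * j + 1) / 2) else 0 := by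
  have hts : ∀ m ∈ Finset.range (n + 1),
      (∑' j : ℤ, if (j < -(k : ℤ) ∨ (k : ℤ) ≤ j) ∧ j * (3 * j + 1) / 2 = ((n - m : ℕ) : ℤ)
        then (-1 : ℤ) ^ (j + k).natAbs else 0)
      = ∑ j ∈ Finset.Icc (-(n : ℤ) - 1) ((n : ℤ) + 1),
          if (j < -(k : ℤ) ∨ (k : ℤ) ≤ j) ∧ j * (3 * j + 1) / 2 = ((n - m : ℕ) : ℤ)
            then (-1 : ℤ) ^ (j + k).natAbs else 0 := by
    intro m _
    apply tsum_eq_sum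
    intro j hj
    rw [if_neg]
    rintro ⟨hc, hG⟩
    apply hj
    rw [Finset.mem_Icc]
    have h1 : ((n - m : ℕ) : ℤ) ≤ (n : ℤ) := by
      have h2 : (n - m : ℕ) ≤ n := by omega
      exact_mod_cast h2
    exact jbound hk hc (by omega)
  rw [Finset.sum_congr rfl (fun m hm => by rw [hts m hm])]
  simp_rw [Finset.mul_sum]
  rw [Finset.sum_comm]
  exact Finset.sum_congr rfl (fun j _ => stepC hk j)


theorem truncated_pentagonal_nonneg_aux (k : ℕ) (hk : 1 ≤ k) (n : ℕ) :
    0 ≤ ∑ m ∈ Finset.range (n + 1),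
      (Fintype.card (Nat.Partition m) : ℤ) *
        ∑' j : ℤ, if (j < -(k : ℤ) ∨ (k : ℤ) ≤ j) ∧ j * (3 * j + 1) / 2 = ((n - m : ℕ) : ℤ)
          then (-1 : ℤ) ^ (j + k).natAbs else 0 := by
  rw [stepAB hk, stepD hk]
  have hc1nn : (0 : ℤ) ≤ (((k - 1) * (3 * k - 2) / 2 : ℕ) : ℤ) := by positivity
  have hc2nn : (0 : ℤ) ≤ ((k * (3 * k - 1) / 2 : ℕ) : ℤ) := by positivity
  have e1 : (∑ i ∈ Finset.range (n + 2),
        (-1 : ℤ) ^ i * pp ((n : ℤ) - ((k : ℤ) + i) * (3 * ((k : ℤ) + i) + 1) / 2))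
      = QQ (3 * k - 2) ((n : ℤ) - ((k - 1) * (3 * k - 2) / 2 : ℕ)) := by
    rw [Finset.sum_congr rfl (fun i (_ : i ∈ Finset.range (n + 2)) => by rw [stepE1 hk i])]
    exact main_id (n + 2) (3 * k - 2) (by omega) _ (by push_cast; omega)
  have e2 : (∑ i ∈ Finset.range (n + 2),
        (-1 : ℤ) ^ i * pp ((n : ℤ) - (-(k : ℤ) - 1 - i) * (3 * (-(k : ℤ) - 1 - i) + 1) / 2))
      = QQ (3 * k) ((n : ℤ) - (k * (3 * k - 1) / 2 : ℕ)) := by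
    rw [Finset.sum_congr rfl (fun i (_ : i ∈ Finset.range (n + 2)) => by rw [stepE2 hk i])]
    exact main_id (n + 2) (3 * k) (by omega) _ (by push_cast; omega)
  rw [e1, e2, sub_nonneg]
  -- QQ (3k) (n - c2) ≤ QQ (3k-2) (n - c1)
  have hcc : ((k * (3 * k - 1) / 2 : ℕ) : ℤ)
      = (((k - 1) * (3 * k - 2) / 2 : ℕ) : ℤ) + (2 * k - 1 : ℕ) := by
    have h1 := cast_c1 hk
    have h2 := cast_c2 hk
    have h3 : ((2 * k - 1 : ℕ) : ℤ) = 2 * (k : ℤ) - 1 := by omega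
    have key : (k : ℤ) * (3 * (k : ℤ) - 1)
        = ((k : ℤ) - 1) * (3 * (k : ℤ) - 2) + 2 * (2 * (k : ℤ) - 1) := by ring
    linarith
  rcases le_or_gt 0 ((n : ℤ) - (k * (3 * k - 1) / 2 : ℕ)) with h | h
  · rw [QQ, QQ, if_pos h,
      if_pos (show (0:ℤ) ≤ (n : ℤ) - (((k - 1) * (3 * k - 2) / 2 : ℕ) : ℤ) by omega)]
    have hmono := Qge_mono (2 * k - 1) (by omega) (m := 3 * k) (by omega)
      ((3 * k - 2 : ℕ) : ℤ) (by omega) (((n : ℤ) - (k * (3 * k - 1) / 2 : ℕ)).toNat)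
    rw [show ((n : ℤ) - (k * (3 * k - 1) / 2 : ℕ)).toNat + (2 * k - 1)
        = ((n : ℤ) - (((k - 1) * (3 * k - 2) / 2 : ℕ))).toNat by omega] at hmono
    rw [show ((3 * k : ℕ) : ℤ) = ((3 * k : ℕ) : ℤ) from rfl]
    exact_mod_cast hmono
  · rw [QQ, if_neg (by omega)]
    exact QQ_nonneg _ _


end AMProof

/-- For `k ≥ 1`, the series `(1/(q;q)_∞) ∑_{j ∉ [-k,k-1]} (-1)^{j+k} q^{j(3j+1)/2}`
has nonnegative coefficients; the `n`-th coefficient is written as a convolution of the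
partition numbers with the coefficients of the tail sum. -/
theorem truncated_pentagonal_nonneg (k : ℕ) (hk : 1 ≤ k) (n : ℕ) :
    0 ≤ ∑ m ∈ Finset.range (n + 1),
      (Fintype.card (Nat.Partition m) : ℤ) *
        ∑' j : ℤ, if (j < -(k : ℤ) ∨ (k : ℤ) ≤ j) ∧ j * (3 * j + 1) / 2 = ((n - m : ℕ) : ℤ)
          then (-1 : ℤ) ^ (j + k).natAbs else 0 :=
  AMProof.truncated_pentagonal_nonneg_aux k hk n
end
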